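/- arXiv:1801.03538 — 11 statements merged into one kernel-verified Lean document; each statement's English description precedes it below -/
import Mathlib

section
/- Let T and T₁ be linearly ordered sets equipped with their order topologies, and let X be a topological space. If f : T × X → T₁ is separately continuous (i.e., for each x ∈ X the map t ↦ f(t,x) is continuous, and for each t ∈ T the map x ↦ f(t,x) is continuous) and for every x ∈ X the function t ↦ f(t,x) is monotone on T, then f is jointly continuous on T × X with the product topology. -/
open Filter Set Topology

private lemma young_left {T : Type*} [LinearOrder T] [TopologicalSpace T] [OrderTopology T]
    {p : T → Prop} {t₀ : T} (h : ∀ᶠ t in 𝓝 t₀, p t) (h0 : p t₀) :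
    ∃ t₁, t₁ ≤ t₀ ∧ p t₁ ∧ Ici t₁ ∈ 𝓝 t₀ := by
  by_cases hbot : (𝓝[<] t₀).NeBot
  · haveI := hbot
    have h' : ∀ᶠ t in 𝓝[<] t₀, p t := h.filter_mono nhdsWithin_le_nhds
    obtain ⟨t₁, ht₁, hpt₁⟩ := (h'.and self_mem_nhdsWithin).exists
    exact ⟨t₁, hpt₁.le, ht₁, mem_of_superset (isOpen_Ioi.mem_nhds hpt₁) Ioi_subset_Ici_self⟩
  · refine ⟨t₀, le_refl _, h0, ?_⟩
    rw [not_neBot] at hbot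
    have : 𝓝 t₀ = 𝓝[≥] t₀ := by
      rw [← nhdsLT_sup_nhdsGE, hbot, bot_sup_eq]
    rw [this]
    exact mem_of_superset self_mem_nhdsWithin (by simp)

private lemma young_right {T : Type*} [LinearOrder T] [TopologicalSpace T] [OrderTopology T]
    {p : T → Prop} {t₀ : T} (h : ∀ᶠ t in 𝓝 t₀, p t) (h0 : p t₀) :
    ∃ t₂, t₀ ≤ t₂ ∧ p t₂ ∧ Iic t₂ ∈ 𝓝 t₀ := by
  by_cases hbot : (𝓝[>] t₀).NeBot
  · haveI := hbot
    have h' : ∀ᶠ t in 𝓝[>] t₀, p t := h.filter_mono nhdsWithin_le_nhds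
    obtain ⟨t₂, ht₂, hpt₂⟩ := (h'.and self_mem_nhdsWithin).exists
    exact ⟨t₂, hpt₂.le, ht₂, mem_of_superset (isOpen_Iio.mem_nhds hpt₂) Iio_subset_Iic_self⟩
  · refine ⟨t₀, le_refl _, h0, ?_⟩
    rw [not_neBot] at hbot
    have : 𝓝 t₀ = 𝓝[≤] t₀ := by
      rw [← nhdsLE_sup_nhdsGT, hbot, sup_bot_eq]
    rw [this]
    exact mem_of_superset self_mem_nhdsWithin (by simp)

private lemma young_lower {T T₁ X : Type*}
    [LinearOrder T] [TopologicalSpace T] [OrderTopology T]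
    [LinearOrder T₁] [TopologicalSpace T₁] [OrderTopology T₁]
    [TopologicalSpace X]
    (f : T → X → T₁)
    (hct : ∀ x, Continuous fun t => f t x)
    (hcx : ∀ t, Continuous fun x => f t x)
    (hm : ∀ x, Monotone (fun t => f t x) ∨ Antitone (fun t => f t x))
    (t₀ : T) (x₀ : X) (b : T₁) (hb : b < f t₀ x₀) :
    ∀ᶠ q in 𝓝 (t₀, x₀), b < f q.1 q.2 := by
  have hev : ∀ᶠ t in 𝓝 t₀, b < f t x₀ :=
    (hct x₀).continuousAt.eventually_mem (isOpen_Ioi.mem_nhds hb)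
  obtain ⟨t₁, ht₁le, ht₁, hS₁⟩ := young_left hev hb
  obtain ⟨t₂, ht₂le, ht₂, hS₂⟩ := young_right hev hb
  have hU : {x | b < f t₁ x ∧ b < f t₂ x} ∈ 𝓝 x₀ := by
    refine Filter.inter_mem ?_ ?_
    · exact (hcx t₁).continuousAt.eventually_mem (isOpen_Ioi.mem_nhds ht₁)
    · exact (hcx t₂).continuousAt.eventually_mem (isOpen_Ioi.mem_nhds ht₂)
  have hST : (Ici t₁ ∩ Iic t₂) ×ˢ {x | b < f t₁ x ∧ b < f t₂ x} ∈ 𝓝 (t₀, x₀) :=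
    prod_mem_nhds (Filter.inter_mem hS₁ hS₂) hU
  filter_upwards [hST] with q hq
  obtain ⟨⟨hq1, hq2⟩, hx1, hx2⟩ := hq
  rcases hm q.2 with hmono | hanti
  · exact lt_of_lt_of_le hx1 (hmono hq1)
  · exact lt_of_lt_of_le hx2 (hanti hq2)

theorem young_generalized {T T₁ X : Type*}
    [LinearOrder T] [TopologicalSpace T] [OrderTopology T]
    [LinearOrder T₁] [TopologicalSpace T₁] [OrderTopology T₁]
    [TopologicalSpace X]
    (f : T → X → T₁)
    (hct : ∀ x, Continuous fun t => f t x)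
    (hcx : ∀ t, Continuous fun x => f t x)
    (hm : ∀ x, Monotone (fun t => f t x) ∨ Antitone (fun t => f t x)) :
    Continuous fun p : T × X => f p.1 p.2 := by
  rw [continuous_iff_continuousAt]
  rintro ⟨t₀, x₀⟩
  rw [ContinuousAt, tendsto_order]
  constructor
  · intro b hb
    exact young_lower f hct hcx hm t₀ x₀ b hb
  · intro b hb
    have := young_lower (T₁ := T₁ᵒᵈ) (fun t x => OrderDual.toDual (f t x))
      (fun x => hct x) (fun t => hcx t)
      (fun x => (hm x).symm.imp Antitone.dual_right Monotone.dual_right)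
      t₀ x₀ (OrderDual.toDual b) hb
    exact this.mono fun q hq => hq
end

section
/- Let T and T₁ be linearly ordered sets with their order topologies and X a topological space. If f : T × X → T₁ is separately continuous and for every x ∈ X the function t ↦ f(t,x) is monotone (nondecreasing), then f is jointly continuous on T × X. -/
open Filter Topology Set

lemma young_aux {T T₁ X : Type*}
    [LinearOrder T] [TopologicalSpace T] [OrderTopology T]
    [LinearOrder T₁] [TopologicalSpace T₁] [OrderTopology T₁]
    [TopologicalSpace X]
    (f : T → X → T₁)
    (hct : ∀ x, Continuous fun t => f t x)
    (hcx : ∀ t, Continuous fun x => f t x)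
    (hm : ∀ x, Monotone fun t => f t x) (a : T₁) :
    IsOpen {p : T × X | a < f p.1 p.2} := by
  rw [isOpen_iff_mem_nhds]
  rintro ⟨t₀, x₀⟩ (h : a < f t₀ x₀)
  by_cases hc : ∃ t₁, t₁ < t₀ ∧ a < f t₁ x₀
  · obtain ⟨t₁, ht₁, hf⟩ := hc
    have hmem : Ioi t₁ ×ˢ {x | a < f t₁ x} ∈ 𝓝 (t₀, x₀) :=
      prod_mem_nhds (Ioi_mem_nhds ht₁)
        ((isOpen_Ioi.preimage (hcx t₁)).mem_nhds hf)
    filter_upwards [hmem] with p hp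
    exact lt_of_lt_of_le hp.2 (hm p.2 (le_of_lt hp.1))
  · push_neg at hc
    have hb : 𝓝[<] t₀ = ⊥ := by
      by_contra hne
      haveI : (𝓝[<] t₀).NeBot := ⟨hne⟩
      have htend : Tendsto (fun t => f t x₀) (𝓝[<] t₀) (𝓝 (f t₀ x₀)) :=
        ((hct x₀).tendsto t₀).mono_left nhdsWithin_le_nhds
      have hev : ∀ᶠ t in 𝓝[<] t₀, a < f t x₀ := htend (Ioi_mem_nhds h)
      obtain ⟨t, ht, ht'⟩ := (hev.and eventually_mem_nhdsWithin).exists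
      exact absurd ht (not_lt_of_ge (hc t ht'))
    have hIci : Ici t₀ ∈ 𝓝 t₀ := by
      have he : 𝓝 t₀ = 𝓝[<] t₀ ⊔ 𝓝[≥] t₀ := (nhdsLT_sup_nhdsGE t₀).symm
      rw [he, hb, bot_sup_eq]
      exact self_mem_nhdsWithin
    have hmem : Ici t₀ ×ˢ {x | a < f t₀ x} ∈ 𝓝 (t₀, x₀) :=
      prod_mem_nhds hIci ((isOpen_Ioi.preimage (hcx t₀)).mem_nhds h)
    filter_upwards [hmem] with p hp
    exact lt_of_lt_of_le hp.2 (hm p.2 hp.1)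

theorem young_monotone {T T₁ X : Type*}
    [LinearOrder T] [TopologicalSpace T] [OrderTopology T]
    [LinearOrder T₁] [TopologicalSpace T₁] [OrderTopology T₁]
    [TopologicalSpace X]
    (f : T → X → T₁)
    (hct : ∀ x, Continuous fun t => f t x)
    (hcx : ∀ t, Continuous fun x => f t x)
    (hm : ∀ x, Monotone fun t => f t x) :
    Continuous fun p : T × X => f p.1 p.2 := by
  have key : ∀ a : T₁, IsOpen {p : T × X | a < f p.1 p.2} :=
    young_aux f hct hcx hm
  have key' : ∀ a : T₁, IsOpen {p : T × X | f p.1 p.2 < a} := by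
    intro a
    have h2 := young_aux (T := Tᵒᵈ) (T₁ := T₁ᵒᵈ) (X := X)
      (fun t x => OrderDual.toDual (f (OrderDual.ofDual t) x))
      (fun x => hct x) (fun t => hcx t) (fun x => (hm x).dual)
      (OrderDual.toDual a)
    exact h2
  rw [OrderTopology.topology_eq_generate_intervals (α := T₁)]
  rw [continuous_generateFrom_iff]
  rintro s ⟨b, rfl | rfl⟩
  · exact key b
  · exact key' b
end

section
/- Let T and T₁ be linearly ordered sets with their order topologies and X a topological space. If f : T × X → T₁ is separately continuous and for every x ∈ X the function t ↦ f(t,x) is antitone (nonincreasing), then f is jointly continuous on T × X. -/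
open Filter Set Topology

theorem young_antitone {T T₁ X : Type*}
    [LinearOrder T] [TopologicalSpace T] [OrderTopology T]
    [LinearOrder T₁] [TopologicalSpace T₁] [OrderTopology T₁]
    [TopologicalSpace X]
    (f : T → X → T₁)
    (hct : ∀ x, Continuous fun t => f t x)
    (hcx : ∀ t, Continuous fun x => f t x)
    (hm : ∀ x, Antitone fun t => f t x) :
    Continuous fun p : T × X => f p.1 p.2 := by
  rw [continuous_iff_continuousAt]
  rintro ⟨t₀, x₀⟩
  rw [ContinuousAt, tendsto_order]
  constructor
  · -- lower bound: a < f t₀ x₀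
    intro a ha
    by_cases h : (𝓝[>] t₀).NeBot
    · have h1 : ∀ᶠ t in 𝓝[>] t₀, a < f t x₀ :=
        (((hct x₀).tendsto t₀).mono_left nhdsWithin_le_nhds).eventually
          (eventually_gt_nhds ha)
      obtain ⟨t₁, ht₁, hft₁⟩ := (h1.and self_mem_nhdsWithin).exists
      have hV : IsOpen {x | a < f t₁ x} := isOpen_lt continuous_const (hcx t₁)
      have hmem : (Iio t₁ ×ˢ {x | a < f t₁ x} : Set (T × X)) ∈ 𝓝 (t₀, x₀) :=
        prod_mem_nhds (Iio_mem_nhds hft₁) (hV.mem_nhds ht₁)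
      filter_upwards [hmem] with q hq
      exact lt_of_lt_of_le hq.2 (hm q.2 hq.1.le)
    · have hb : 𝓝[>] t₀ = ⊥ := not_neBot.mp h
      have hIic : Iic t₀ ∈ 𝓝 t₀ := by
        rw [← nhdsLE_sup_nhdsGT t₀, hb, sup_bot_eq]
        exact self_mem_nhdsWithin
      have hV : IsOpen {x | a < f t₀ x} := isOpen_lt continuous_const (hcx t₀)
      have hmem : (Iic t₀ ×ˢ {x | a < f t₀ x} : Set (T × X)) ∈ 𝓝 (t₀, x₀) :=
        prod_mem_nhds hIic (hV.mem_nhds ha)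
      filter_upwards [hmem] with q hq
      exact lt_of_lt_of_le hq.2 (hm q.2 hq.1)
  · -- upper bound: f t₀ x₀ < b
    intro b hb
    by_cases h : (𝓝[<] t₀).NeBot
    · have h1 : ∀ᶠ t in 𝓝[<] t₀, f t x₀ < b :=
        (((hct x₀).tendsto t₀).mono_left nhdsWithin_le_nhds).eventually
          (eventually_lt_nhds hb)
      obtain ⟨t₁, ht₁, hft₁⟩ := (h1.and self_mem_nhdsWithin).exists
      have hV : IsOpen {x | f t₁ x < b} := isOpen_lt (hcx t₁) continuous_const
      have hmem : (Ioi t₁ ×ˢ {x | f t₁ x < b} : Set (T × X)) ∈ 𝓝 (t₀, x₀) :=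
        prod_mem_nhds (Ioi_mem_nhds hft₁) (hV.mem_nhds ht₁)
      filter_upwards [hmem] with q hq
      exact lt_of_le_of_lt (hm q.2 hq.1.le) hq.2
    · have hb' : 𝓝[<] t₀ = ⊥ := not_neBot.mp h
      have hIci : Ici t₀ ∈ 𝓝 t₀ := by
        rw [← nhdsLT_sup_nhdsGE t₀, hb', bot_sup_eq]
        exact self_mem_nhdsWithin
      have hV : IsOpen {x | f t₀ x < b} := isOpen_lt (hcx t₀) continuous_const
      have hmem : (Ici t₀ ×ˢ {x | f t₀ x < b} : Set (T × X)) ∈ 𝓝 (t₀, x₀) :=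
        prod_mem_nhds hIci (hV.mem_nhds hb)
      filter_upwards [hmem] with q hq
      exact lt_of_le_of_lt (hm q.2 hq.1) hq.2
end

section
/- (Young's theorem) If f : ℝ × ℝ → ℝ is continuous in each variable separately and for every y ∈ ℝ the function x ↦ f(x,y) is monotone, then f is jointly continuous on ℝ². -/
theorem young_real (f : ℝ → ℝ → ℝ)
    (hcx : ∀ y, Continuous fun x => f x y)
    (hcy : ∀ x, Continuous fun y => f x y)
    (hm : ∀ y, Monotone (fun x => f x y) ∨ Antitone (fun x => f x y)) :
    Continuous fun p : ℝ × ℝ => f p.1 p.2 := by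
  rw [continuous_iff_continuousAt]
  rintro ⟨a, b⟩
  rw [Metric.continuousAt_iff]
  intro ε hε
  have hε3 : 0 < ε / 3 := by linarith
  obtain ⟨δ₁, hδ₁, h1⟩ := Metric.continuousAt_iff.1 (hcx b).continuousAt (ε / 3) hε3
  set x₁ := a - δ₁ / 2 with hx₁def
  set x₂ := a + δ₁ / 2 with hx₂def
  have hd1 : dist x₁ a < δ₁ := by
    rw [Real.dist_eq]
    have : x₁ - a = -(δ₁ / 2) := by rw [hx₁def]; ring
    rw [this, abs_neg, abs_of_pos (by linarith)]; linarith
  have hd2 : dist x₂ a < δ₁ := by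
    rw [Real.dist_eq]
    have : x₂ - a = δ₁ / 2 := by rw [hx₂def]; ring
    rw [this, abs_of_pos (by linarith)]; linarith
  have hf1b : |f x₁ b - f a b| < ε / 3 := by
    have := h1 hd1; rwa [Real.dist_eq] at this
  have hf2b : |f x₂ b - f a b| < ε / 3 := by
    have := h1 hd2; rwa [Real.dist_eq] at this
  obtain ⟨δ₂, hδ₂, h2⟩ := Metric.continuousAt_iff.1 (hcy x₁).continuousAt (ε / 3) hε3
  obtain ⟨δ₃, hδ₃, h3⟩ := Metric.continuousAt_iff.1 (hcy x₂).continuousAt (ε / 3) hε3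
  refine ⟨min (δ₁ / 2) (min δ₂ δ₃), by positivity, ?_⟩
  rintro ⟨x, y⟩ hp
  rw [Prod.dist_eq] at hp
  simp only [max_lt_iff] at hp
  obtain ⟨hpx, hpy⟩ := hp
  have hxa : |x - a| < δ₁ / 2 := by
    have := lt_of_lt_of_le hpx (min_le_left _ _); rwa [Real.dist_eq] at this
  have hyb2 : dist y b < δ₂ :=
    lt_of_lt_of_le hpy (le_trans (min_le_right _ _) (min_le_left _ _))
  have hyb3 : dist y b < δ₃ :=
    lt_of_lt_of_le hpy (le_trans (min_le_right _ _) (min_le_right _ _))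
  have hf1y : |f x₁ y - f x₁ b| < ε / 3 := by
    have := h2 hyb2; rwa [Real.dist_eq] at this
  have hf2y : |f x₂ y - f x₂ b| < ε / 3 := by
    have := h3 hyb3; rwa [Real.dist_eq] at this
  have hxge : x₁ ≤ x := by
    have := abs_lt.1 hxa; rw [hx₁def]; linarith [this.1]
  have hxle : x ≤ x₂ := by
    have := abs_lt.1 hxa; rw [hx₂def]; linarith [this.2]
  have key : min (f x₁ y) (f x₂ y) ≤ f x y ∧ f x y ≤ max (f x₁ y) (f x₂ y) := by
    rcases hm y with h | h
    · exact ⟨le_trans (min_le_left _ _) (h hxge), le_trans (h hxle) (le_max_right _ _)⟩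
    · exact ⟨le_trans (min_le_right _ _) (h hxle), le_trans (h hxge) (le_max_left _ _)⟩
  have e1 := abs_lt.1 hf1b
  have e2 := abs_lt.1 hf2b
  have e3 := abs_lt.1 hf1y
  have e4 := abs_lt.1 hf2y
  have hmin : f a b - ε < min (f x₁ y) (f x₂ y) := by
    apply lt_min <;> linarith
  have hmax : max (f x₁ y) (f x₂ y) < f a b + ε := by
    apply max_lt <;> linarith
  rw [Real.dist_eq, abs_lt]
  constructor <;> linarith [key.1, key.2]
end

section
/- If f : ℝ × ℝ → ℝ is continuous in each variable separately and for every y ∈ ℝ the function x ↦ f(x,y) is nondecreasing, then f is jointly continuous. -/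
theorem young_real_monotone (f : ℝ → ℝ → ℝ)
    (hcx : ∀ y, Continuous fun x => f x y)
    (hcy : ∀ x, Continuous fun y => f x y)
    (hm : ∀ y, Monotone fun x => f x y) :
    Continuous fun p : ℝ × ℝ => f p.1 p.2 := by
  rw [continuous_iff_continuousAt]
  rintro ⟨a, b⟩
  rw [Metric.continuousAt_iff]
  intro ε hε
  obtain ⟨η, hη, h1⟩ := Metric.continuousAt_iff.1 ((hcx b).continuousAt (x := a)) (ε / 4)
    (by linarith)
  set x₁ := a - η / 2 with hx₁def
  set x₂ := a + η / 2 with hx₂def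
  have hb1 : |f x₁ b - f a b| < ε / 4 := by
    have := h1 (x := x₁) (by rw [Real.dist_eq]; simp [hx₁def]; rw [abs_of_pos (by linarith)]; linarith)
    rwa [Real.dist_eq] at this
  have hb2 : |f x₂ b - f a b| < ε / 4 := by
    have := h1 (x := x₂) (by rw [Real.dist_eq]; simp [hx₂def]; rw [abs_of_pos (by linarith)]; linarith)
    rwa [Real.dist_eq] at this
  obtain ⟨δ₁, hδ₁, h2⟩ := Metric.continuousAt_iff.1 ((hcy x₁).continuousAt (x := b)) (ε / 4)
    (by linarith)
  obtain ⟨δ₂, hδ₂, h3⟩ := Metric.continuousAt_iff.1 ((hcy x₂).continuousAt (x := b)) (ε / 4)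
    (by linarith)
  refine ⟨min (η / 2) (min δ₁ δ₂), by positivity, ?_⟩
  rintro ⟨x, y⟩ hd
  rw [Prod.dist_eq] at hd
  have hdx : dist x a < η / 2 := lt_of_le_of_lt (le_max_left _ _) (lt_of_lt_of_le hd (min_le_left _ _))
  have hdy : dist y b < min δ₁ δ₂ := lt_of_le_of_lt (le_max_right _ _) (lt_of_lt_of_le hd (min_le_right _ _))
  have hxl : x₁ ≤ x := by
    rw [Real.dist_eq, abs_lt] at hdx; simp [hx₁def]; linarith [hdx.1]
  have hxr : x ≤ x₂ := by
    rw [Real.dist_eq, abs_lt] at hdx; simp [hx₂def]; linarith [hdx.2]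
  have hy1 : |f x₁ y - f x₁ b| < ε / 4 := by
    have := h2 (x := y) (lt_of_lt_of_le hdy (min_le_left _ _))
    rwa [Real.dist_eq] at this
  have hy2 : |f x₂ y - f x₂ b| < ε / 4 := by
    have := h3 (x := y) (lt_of_lt_of_le hdy (min_le_right _ _))
    rwa [Real.dist_eq] at this
  have hm1 : f x₁ y ≤ f x y := hm y hxl
  have hm2 : f x y ≤ f x₂ y := hm y hxr
  rw [Real.dist_eq, abs_lt]
  rw [abs_lt] at hb1 hb2 hy1 hy2
  constructor <;> simp only [] <;> [linarith [hb1.1, hy1.1]; linarith [hb2.2, hy2.2]]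
end

section
/- (Kruse–Deely theorem) Let f : ℝᵈ × ℝ → ℝ (d ≥ 1) be continuous in each of its d+1 variables separately, and suppose f(t₁, …, t_d, τ) is monotone in each t_i separately (for each fixed choice of the other variables). Then f is jointly continuous on ℝ^{d+1}. -/
open Filter

/-- Sandwich lemma (upper half): a function on `Fin d → ℝ` that is monotone or antitone
in each coordinate is bounded above on a box by its value at some corner. -/
lemma kd_sandwich_up (d : ℕ) (G : (Fin d → ℝ) → ℝ)
    (hm : ∀ (t : Fin d → ℝ) (i : Fin d),
      Monotone (fun s => G (Function.update t i s)) ∨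
      Antitone (fun s => G (Function.update t i s)))
    (a : Fin d → ℝ) (h : ℝ) (t : Fin d → ℝ)
    (ht : ∀ i, a i - h ≤ t i ∧ t i ≤ a i + h) :
    ∃ u, (∀ i, u i = a i - h ∨ u i = a i + h) ∧ G t ≤ G u := by
  have key : ∀ s : Finset (Fin d), ∃ u, (∀ i ∈ s, u i = a i - h ∨ u i = a i + h) ∧
      (∀ i ∉ s, u i = t i) ∧ G t ≤ G u := by
    intro s
    induction s using Finset.induction_on with
    | empty => exact ⟨t, by simp, fun _ _ => rfl, le_rfl⟩
    | @insert i s hi ih =>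
      obtain ⟨u, hu1, hu2, hu3⟩ := ih
      have hui : u i = t i := hu2 i hi
      rcases hm u i with hmono | hanti
      · refine ⟨Function.update u i (a i + h), ?_, ?_, ?_⟩
        · intro j hj
          rcases Finset.mem_insert.mp hj with rfl | hj
          · right; simp
          · rcases Decidable.eq_or_ne j i with rfl | hne
            · right; simp
            · rw [Function.update_of_ne hne]; exact hu1 j hj
        · intro j hj
          have hji : j ≠ i := fun e => hj (by simp [e])
          rw [Function.update_of_ne hji]
          exact hu2 j (fun hjs => hj (Finset.mem_insert_of_mem hjs))
        · refine hu3.trans ?_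
          have : u i ≤ a i + h := by rw [hui]; exact (ht i).2
          calc G u = G (Function.update u i (u i)) := by rw [Function.update_eq_self]
            _ ≤ G (Function.update u i (a i + h)) := hmono this
      · refine ⟨Function.update u i (a i - h), ?_, ?_, ?_⟩
        · intro j hj
          rcases Finset.mem_insert.mp hj with rfl | hj
          · left; simp
          · rcases Decidable.eq_or_ne j i with rfl | hne
            · left; simp
            · rw [Function.update_of_ne hne]; exact hu1 j hj
        · intro j hj
          have hji : j ≠ i := fun e => hj (by simp [e])
          rw [Function.update_of_ne hji]
          exact hu2 j (fun hjs => hj (Finset.mem_insert_of_mem hjs))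
        · refine hu3.trans ?_
          have : a i - h ≤ u i := by rw [hui]; exact (ht i).1
          calc G u = G (Function.update u i (u i)) := by rw [Function.update_eq_self]
            _ ≤ G (Function.update u i (a i - h)) := hanti this
  obtain ⟨u, hu1, _, hu3⟩ := key Finset.univ
  exact ⟨u, fun i => hu1 i (Finset.mem_univ i), hu3⟩

/-- Sandwich lemma (lower half). -/
lemma kd_sandwich_lo (d : ℕ) (G : (Fin d → ℝ) → ℝ)
    (hm : ∀ (t : Fin d → ℝ) (i : Fin d),
      Monotone (fun s => G (Function.update t i s)) ∨
      Antitone (fun s => G (Function.update t i s)))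
    (a : Fin d → ℝ) (h : ℝ) (t : Fin d → ℝ)
    (ht : ∀ i, a i - h ≤ t i ∧ t i ≤ a i + h) :
    ∃ u, (∀ i, u i = a i - h ∨ u i = a i + h) ∧ G u ≤ G t := by
  obtain ⟨u, hu1, hu2⟩ := kd_sandwich_up d (fun v => -G v)
    (fun t i => (hm t i).symm.imp Antitone.neg Monotone.neg) a h t ht
  exact ⟨u, hu1, by linarith⟩

/-- A corner of the box is of the form `fun i => a i + if σ i then h else -h`. -/
lemma kd_corner_form (d : ℕ) (a : Fin d → ℝ) (h : ℝ) (hh : 0 < h)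
    (u : Fin d → ℝ) (hu : ∀ i, u i = a i - h ∨ u i = a i + h) :
    ∃ σ : Fin d → Bool, u = fun i => a i + if σ i then h else -h := by
  refine ⟨fun i => decide (u i = a i + h), funext fun i => ?_⟩
  rcases hu i with hui | hui
  · have hne : u i ≠ a i + h := by rw [hui]; intro e; linarith
    simp only [decide_eq_false hne, Bool.false_eq_true, if_false]
    rw [hui]; ring
  · simp [hui]

/-- The main induction: the Kruse–Deely theorem with no restriction on `d`. -/
lemma kd_aux : ∀ (d : ℕ) (f : (Fin d → ℝ) → ℝ → ℝ),
    (∀ (t : Fin d → ℝ) (τ : ℝ) (i : Fin d),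
      Continuous fun s => f (Function.update t i s) τ) →
    (∀ t : Fin d → ℝ, Continuous fun τ => f t τ) →
    (∀ (t : Fin d → ℝ) (τ : ℝ) (i : Fin d),
      Monotone (fun s => f (Function.update t i s) τ) ∨
      Antitone (fun s => f (Function.update t i s) τ)) →
    Continuous fun p : (Fin d → ℝ) × ℝ => f p.1 p.2 := by
  intro d
  induction d with
  | zero =>
    intro f hct hcτ hm
    have hval : ∀ p : (Fin 0 → ℝ) × ℝ, f p.1 p.2 = f (fun i => i.elim0) p.2 := by
      intro p; congr 1; exact Subsingleton.elim _ _
    simp only [hval]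
    exact (hcτ _).comp continuous_snd
  | succ d ih =>
    intro f hct hcτ hm
    -- For each fixed τ₀, `f · τ₀` is jointly continuous, via the induction hypothesis.
    have hslice : ∀ τ₀ : ℝ, Continuous fun v : Fin (d + 1) → ℝ => f v τ₀ := by
      intro τ₀
      set F : (Fin d → ℝ) → ℝ → ℝ := fun t s => f (Fin.snoc t s) τ₀ with hF
      have hF1 : ∀ (t : Fin d → ℝ) (s : ℝ) (i : Fin d),
          (fun r => F (Function.update t i r) s) =
          (fun r => f (Function.update (Fin.snoc t s) i.castSucc r) τ₀) := by
        intro t s i; funext r; simp only [hF, Fin.snoc_update]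
      have hF2 : ∀ t : Fin d → ℝ, (fun s => F t s) =
          (fun s => f (Function.update (Fin.snoc t (0:ℝ)) (Fin.last d) s) τ₀) := by
        intro t; funext s; simp only [hF, Fin.update_snoc_last]
      have hcont : Continuous fun p : (Fin d → ℝ) × ℝ => F p.1 p.2 := by
        refine ih F ?_ ?_ ?_
        · intro t s i; rw [hF1]; exact hct _ _ _
        · intro t; rw [hF2]; exact hct _ _ _
        · intro t s i; rw [hF1]; exact hm _ _ _
      have : (fun v : Fin (d + 1) → ℝ => f v τ₀) =
          (fun p : (Fin d → ℝ) × ℝ => F p.1 p.2) ∘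
            (fun v => (Fin.init v, v (Fin.last d))) := by
        funext v; simp only [Function.comp_apply, hF, Fin.snoc_init_self]
      rw [this]
      refine hcont.comp (Continuous.prodMk ?_ (continuous_apply _))
      exact continuous_pi fun i => continuous_apply _
    -- Now prove joint continuity by ε–δ at each point.
    rw [continuous_iff_continuousAt]
    rintro ⟨a, τ₀⟩
    rw [Metric.continuousAt_iff]
    intro ε hε
    -- radius r of continuity of the slice at τ₀
    obtain ⟨r, hr, hrball⟩ := Metric.continuousAt_iff.mp ((hslice τ₀).continuousAt (x := a))
      (ε / 2) (by linarith)
    set h : ℝ := r / 2 with hhdef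
    have hh : 0 < h := by positivity
    -- corners
    set c : (Fin (d + 1) → Bool) → (Fin (d + 1) → ℝ) :=
      fun σ i => a i + if σ i then h else -h with hc
    have hcorner_dist : ∀ σ, dist (c σ) a < r := by
      intro σ
      have : dist (c σ) a ≤ h := by
        rw [dist_pi_le_iff hh.le]
        intro i
        simp only [hc, Real.dist_eq, add_sub_cancel_left]
        split <;> simp [abs_of_pos hh, abs_of_neg (neg_neg_iff_pos.mpr hh), hh.le]
      calc dist (c σ) a ≤ h := this
        _ < r := by rw [hhdef]; linarith
    have hcorner : ∀ σ, dist (f (c σ) τ₀) (f a τ₀) < ε / 2 :=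
      fun σ => hrball (hcorner_dist σ)
    -- continuity in τ at every corner, uniformly (finitely many corners)
    have hτall : ∀ᶠ τ in nhds τ₀, ∀ σ, dist (f (c σ) τ) (f (c σ) τ₀) < ε / 2 := by
      rw [eventually_all]
      intro σ
      have := Metric.tendsto_nhds.mp ((hcτ (c σ)).tendsto τ₀) (ε / 2) (by linarith)
      exact this
    obtain ⟨δ, hδ, hδball⟩ := Metric.eventually_nhds_iff.mp hτall
    refine ⟨min δ h, lt_min hδ hh, ?_⟩
    rintro ⟨t, τ⟩ hdist
    have hdt : dist t a ≤ h := by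
      have h1 : dist t a ≤ dist ((t, τ) : (Fin (d+1) → ℝ) × ℝ) (a, τ₀) :=
        le_max_left _ _
      have h2 : dist ((t, τ) : (Fin (d+1) → ℝ) × ℝ) (a, τ₀) < min δ h := hdist
      exact (h1.trans_lt (h2.trans_le (min_le_right _ _))).le
    have hdτ : dist τ τ₀ < δ := by
      have h1 : dist τ τ₀ ≤ dist ((t, τ) : (Fin (d+1) → ℝ) × ℝ) (a, τ₀) :=
        le_max_right _ _
      exact h1.trans_lt (hdist.trans_le (min_le_left _ _))
    have hbox : ∀ i, a i - h ≤ t i ∧ t i ≤ a i + h := by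
      intro i
      have := (dist_le_pi_dist t a i).trans hdt
      rw [Real.dist_eq, abs_le] at this
      constructor <;> linarith [this.1, this.2]
    have hτcorners := hδball hdτ
    -- sandwich at level τ
    have hmτ : ∀ (v : Fin (d+1) → ℝ) (i : Fin (d+1)),
        Monotone (fun s => f (Function.update v i s) τ) ∨
        Antitone (fun s => f (Function.update v i s) τ) := fun v i => hm v τ i
    obtain ⟨u₂, hu₂c, hu₂⟩ := kd_sandwich_up (d+1) (fun v => f v τ) hmτ a h t hbox
    obtain ⟨u₁, hu₁c, hu₁⟩ := kd_sandwich_lo (d+1) (fun v => f v τ) hmτ a h t hbox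
    obtain ⟨σ₂, rfl⟩ := kd_corner_form (d+1) a h hh u₂ hu₂c
    obtain ⟨σ₁, rfl⟩ := kd_corner_form (d+1) a h hh u₁ hu₁c
    -- combine
    have H2τ := hτcorners σ₂
    have H1τ := hτcorners σ₁
    have H2 := hcorner σ₂
    have H1 := hcorner σ₁
    simp only [hc, Real.dist_eq, abs_lt] at H2τ H1τ H2 H1 ⊢
    constructor
    · linarith [H1τ.1, H1.1, hu₁]
    · linarith [H2τ.2, H2.2, hu₂]

theorem kruse_deely (d : ℕ) (hd : 1 ≤ d) (f : (Fin d → ℝ) → ℝ → ℝ)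
    (hct : ∀ (t : Fin d → ℝ) (τ : ℝ) (i : Fin d),
      Continuous fun s => f (Function.update t i s) τ)
    (hcτ : ∀ t : Fin d → ℝ, Continuous fun τ => f t τ)
    (hm : ∀ (t : Fin d → ℝ) (τ : ℝ) (i : Fin d),
      Monotone (fun s => f (Function.update t i s) τ) ∨
      Antitone (fun s => f (Function.update t i s) τ)) :
    Continuous fun p : (Fin d → ℝ) × ℝ => f p.1 p.2 :=
  kd_aux d f hct hcτ hm
end

section
/- Let T₀, T₁, T₂ be linearly ordered sets with order topologies and X a topological space. If f : T₁ × T₂ × X → T₀ is continuous in each of its three variables separately, and f is monotone in t₁ (for each fixed (t₂,x)) and monotone in t₂ (for each fixed (t₁,x)), then f is jointly continuous on T₁ × T₂ × X with the product topology. -/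
open Set Filter Topology

theorem youngAux {T₀ T Y : Type*} [LinearOrder T₀] [TopologicalSpace T₀] [OrderTopology T₀]
    [LinearOrder T] [TopologicalSpace T] [OrderTopology T] [TopologicalSpace Y]
    (f : T → Y → T₀)
    (hct : ∀ y, Continuous fun t => f t y)
    (hcy : ∀ t, Continuous (f t))
    (hm : ∀ y, Monotone (fun t => f t y) ∨ Antitone (fun t => f t y)) :
    Continuous fun p : T × Y => f p.1 p.2 := by
  rw [continuous_iff_continuousAt]
  rintro ⟨t, y₀⟩
  rw [ContinuousAt, tendsto_order]
  constructor
  · intro a ha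
    obtain ⟨v, htv, hv, hvmem⟩ : ∃ v, t ≤ v ∧ a < f v y₀ ∧ Iic v ∈ 𝓝 t := by
      by_cases h : ∃ v, t < v ∧ a < f v y₀
      · obtain ⟨v, h1, h2⟩ := h
        exact ⟨v, h1.le, h2, mem_of_superset (Iio_mem_nhds h1) Iio_subset_Iic_self⟩
      · refine ⟨t, le_rfl, ha, mem_of_superset
          (((hct y₀).isOpen_preimage _ isOpen_Ioi).mem_nhds ha) ?_⟩
        intro s hs
        by_contra hst
        exact h ⟨s, not_le.mp hst, hs⟩
    obtain ⟨u, hut, hu, humem⟩ : ∃ u, u ≤ t ∧ a < f u y₀ ∧ Ici u ∈ 𝓝 t := by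
      by_cases h : ∃ u, u < t ∧ a < f u y₀
      · obtain ⟨u, h1, h2⟩ := h
        exact ⟨u, h1.le, h2, mem_of_superset (Ioi_mem_nhds h1) Ioi_subset_Ici_self⟩
      · refine ⟨t, le_rfl, ha, mem_of_superset
          (((hct y₀).isOpen_preimage _ isOpen_Ioi).mem_nhds ha) ?_⟩
        intro s hs
        by_contra hst
        exact h ⟨s, not_le.mp hst, hs⟩
    have hU : {y | a < f u y} ∈ 𝓝 y₀ := ((hcy u).isOpen_preimage _ isOpen_Ioi).mem_nhds hu
    have hV : {y | a < f v y} ∈ 𝓝 y₀ := ((hcy v).isOpen_preimage _ isOpen_Ioi).mem_nhds hv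
    have hprod := Filter.prod_mem_prod (inter_mem hvmem humem) (inter_mem hU hV)
    rw [← nhds_prod_eq] at hprod
    filter_upwards [hprod] with p hp
    obtain ⟨⟨hp1, hp2⟩, hp3, hp4⟩ := hp
    rcases hm p.2 with hmono | hanti
    · exact lt_of_lt_of_le hp3 (hmono hp2)
    · exact lt_of_lt_of_le hp4 (hanti hp1)
  · intro b hb
    obtain ⟨v, htv, hv, hvmem⟩ : ∃ v, t ≤ v ∧ f v y₀ < b ∧ Iic v ∈ 𝓝 t := by
      by_cases h : ∃ v, t < v ∧ f v y₀ < b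
      · obtain ⟨v, h1, h2⟩ := h
        exact ⟨v, h1.le, h2, mem_of_superset (Iio_mem_nhds h1) Iio_subset_Iic_self⟩
      · refine ⟨t, le_rfl, hb, mem_of_superset
          (((hct y₀).isOpen_preimage _ isOpen_Iio).mem_nhds hb) ?_⟩
        intro s hs
        by_contra hst
        exact h ⟨s, not_le.mp hst, hs⟩
    obtain ⟨u, hut, hu, humem⟩ : ∃ u, u ≤ t ∧ f u y₀ < b ∧ Ici u ∈ 𝓝 t := by
      by_cases h : ∃ u, u < t ∧ f u y₀ < b
      · obtain ⟨u, h1, h2⟩ := h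
        exact ⟨u, h1.le, h2, mem_of_superset (Ioi_mem_nhds h1) Ioi_subset_Ici_self⟩
      · refine ⟨t, le_rfl, hb, mem_of_superset
          (((hct y₀).isOpen_preimage _ isOpen_Iio).mem_nhds hb) ?_⟩
        intro s hs
        by_contra hst
        exact h ⟨s, not_le.mp hst, hs⟩
    have hU : {y | f u y < b} ∈ 𝓝 y₀ := ((hcy u).isOpen_preimage _ isOpen_Iio).mem_nhds hu
    have hV : {y | f v y < b} ∈ 𝓝 y₀ := ((hcy v).isOpen_preimage _ isOpen_Iio).mem_nhds hv
    have hprod := Filter.prod_mem_prod (inter_mem hvmem humem) (inter_mem hU hV)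
    rw [← nhds_prod_eq] at hprod
    filter_upwards [hprod] with p hp
    obtain ⟨⟨hp1, hp2⟩, hp3, hp4⟩ := hp
    rcases hm p.2 with hmono | hanti
    · exact lt_of_le_of_lt (hmono hp1) hp4
    · exact lt_of_le_of_lt (hanti hp2) hp3

theorem young_two_orders {T₀ T₁ T₂ X : Type*}
    [LinearOrder T₀] [TopologicalSpace T₀] [OrderTopology T₀]
    [LinearOrder T₁] [TopologicalSpace T₁] [OrderTopology T₁]
    [LinearOrder T₂] [TopologicalSpace T₂] [OrderTopology T₂]
    [TopologicalSpace X]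
    (f : T₁ → T₂ → X → T₀)
    (hc1 : ∀ t₂ x, Continuous fun t₁ => f t₁ t₂ x)
    (hc2 : ∀ t₁ x, Continuous fun t₂ => f t₁ t₂ x)
    (hcx : ∀ t₁ t₂, Continuous fun x => f t₁ t₂ x)
    (hm1 : ∀ t₂ x, Monotone (fun t₁ => f t₁ t₂ x) ∨ Antitone (fun t₁ => f t₁ t₂ x))
    (hm2 : ∀ t₁ x, Monotone (fun t₂ => f t₁ t₂ x) ∨ Antitone (fun t₂ => f t₁ t₂ x)) :
    Continuous fun p : T₁ × T₂ × X => f p.1 p.2.1 p.2.2 := by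
  have key : ∀ t₁, Continuous fun p : T₂ × X => f t₁ p.1 p.2 := fun t₁ =>
    youngAux (f t₁) (fun x => hc2 t₁ x) (fun t₂ => hcx t₁ t₂) (fun x => hm2 t₁ x)
  exact youngAux (fun t₁ (p : T₂ × X) => f t₁ p.1 p.2) (fun p => hc1 p.1 p.2) key (fun p => hm1 p.1 p.2)
end

section
/- Let G ⊆ ℝ² be an open set and f : G → ℝ continuous in each variable separately on G, such that for each fixed y, the map x ↦ f(x,y) is monotone on every interval contained in the corresponding section of G. Then f is continuous on G. -/
theorem young_open_set (G : Set (ℝ × ℝ)) (hG : IsOpen G) (f : ℝ → ℝ → ℝ)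
    (hcx : ∀ y : ℝ, ContinuousOn (fun x => f x y) {x | (x, y) ∈ G})
    (hcy : ∀ x : ℝ, ContinuousOn (fun y => f x y) {y | (x, y) ∈ G})
    (hm : ∀ (y : ℝ) (I : Set ℝ), I.OrdConnected → I ⊆ {x | (x, y) ∈ G} →
      MonotoneOn (fun x => f x y) I ∨ AntitoneOn (fun x => f x y) I) :
    ContinuousOn (fun p : ℝ × ℝ => f p.1 p.2) G := by
  rintro ⟨a, b⟩ hp
  apply ContinuousAt.continuousWithinAt
  rw [Metric.continuousAt_iff]
  intro ε hε
  obtain ⟨δ, hδ, hball⟩ := Metric.isOpen_iff.1 hG (a, b) hp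
  set r := δ / 2 with hrdef
  have hr : 0 < r := by positivity
  have hsq : ∀ s t : ℝ, |s - a| ≤ r → |t - b| ≤ r → (s, t) ∈ G := by
    intro s t hs ht
    apply hball
    rw [Metric.mem_ball, Prod.dist_eq]
    simp only [Real.dist_eq]
    exact max_lt (by linarith) (by linarith)
  -- continuity of x ↦ f x b at a
  have hcx' : ContinuousAt (fun x => f x b) a := by
    have hop : IsOpen {x : ℝ | (x, b) ∈ G} :=
      hG.preimage (continuous_id.prodMk continuous_const)
    exact (hcx b).continuousAt (hop.mem_nhds hp)
  obtain ⟨δ₁', hδ₁', h1⟩ := Metric.continuousAt_iff.1 hcx' (ε / 4) (by linarith)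
  set δ₁ := min r (δ₁' / 2) with hδ₁def
  have hδ₁pos : 0 < δ₁ := lt_min hr (by linarith)
  have hδ₁r : δ₁ ≤ r := min_le_left _ _
  have h1' : ∀ x : ℝ, |x - a| ≤ δ₁ → |f x b - f a b| < ε / 4 := by
    intro x hx
    have hxa : dist x a < δ₁' := by
      rw [Real.dist_eq]
      have := min_le_right r (δ₁' / 2)
      linarith
    have := h1 hxa
    rwa [Real.dist_eq] at this
  set u := a - δ₁ with hu
  set v := a + δ₁ with hv
  have hua : |u - a| ≤ δ₁ := by rw [abs_le]; constructor <;> simp [hu] <;> linarith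
  have hva : |v - a| ≤ δ₁ := by rw [abs_le]; constructor <;> simp [hv] <;> linarith
  have hubG : (u, b) ∈ G := hsq u b (le_trans hua hδ₁r) (by simpa using le_of_lt hr)
  have hvbG : (v, b) ∈ G := hsq v b (le_trans hva hδ₁r) (by simpa using le_of_lt hr)
  -- continuity of y ↦ f u y and y ↦ f v y at b
  have hcu : ContinuousAt (fun y => f u y) b := by
    have hop : IsOpen {y : ℝ | (u, y) ∈ G} :=
      hG.preimage (continuous_const.prodMk continuous_id)
    exact (hcy u).continuousAt (hop.mem_nhds hubG)
  have hcv : ContinuousAt (fun y => f v y) b := by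
    have hop : IsOpen {y : ℝ | (v, y) ∈ G} :=
      hG.preimage (continuous_const.prodMk continuous_id)
    exact (hcy v).continuousAt (hop.mem_nhds hvbG)
  obtain ⟨δᵤ, hδᵤ, hu4⟩ := Metric.continuousAt_iff.1 hcu (ε / 4) (by linarith)
  obtain ⟨δᵥ, hδᵥ, hv4⟩ := Metric.continuousAt_iff.1 hcv (ε / 4) (by linarith)
  refine ⟨min δ₁ (min δᵤ δᵥ), lt_min hδ₁pos (lt_min hδᵤ hδᵥ), ?_⟩
  rintro ⟨x, y⟩ hxy
  rw [Prod.dist_eq] at hxy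
  have hxd : dist x a < δ₁ := lt_of_le_of_lt (le_max_left _ _)
    (lt_of_lt_of_le hxy (min_le_left _ _))
  have hyd : dist y b < min δᵤ δᵥ := lt_of_le_of_lt (le_max_right _ _)
    (lt_of_lt_of_le hxy (min_le_right _ _))
  have hyd₁ : dist y b < δ₁ := lt_of_le_of_lt (le_max_right _ _)
    (lt_of_lt_of_le hxy (min_le_left _ _))
  have hxabs : |x - a| < δ₁ := by rwa [Real.dist_eq] at hxd
  have hyabs : |y - b| < δ₁ := by rwa [Real.dist_eq] at hyd₁
  -- the segment [u,v] × {y} is inside G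
  have hseg : Set.Icc u v ⊆ {x : ℝ | (x, y) ∈ G} := by
    intro t ht
    have h1t : |t - a| ≤ δ₁ := by
      rw [abs_le]; constructor
      · have := ht.1; simp only [hu] at this; linarith
      · have := ht.2; simp only [hv] at this; linarith
    exact hsq t y (le_trans h1t hδ₁r) (le_trans (le_of_lt hyabs) hδ₁r)
  have humem : u ∈ Set.Icc u v := by
    constructor <;> simp [hu, hv] <;> linarith
  have hvmem : v ∈ Set.Icc u v := by
    constructor <;> simp [hu, hv] <;> linarith
  have hxmem : x ∈ Set.Icc u v := by
    rw [abs_lt] at hxabs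
    constructor <;> simp [hu, hv] <;> linarith
  -- estimates for f u y and f v y
  have hufb : |f u b - f a b| < ε / 4 := h1' u hua
  have hvfb : |f v b - f a b| < ε / 4 := h1' v hva
  have huy : |f u y - f u b| < ε / 4 := by
    have := hu4 (lt_of_lt_of_le hyd (min_le_left _ _))
    rwa [Real.dist_eq] at this
  have hvy : |f v y - f v b| < ε / 4 := by
    have := hv4 (lt_of_lt_of_le hyd (min_le_right _ _))
    rwa [Real.dist_eq] at this
  have hufy : |f u y - f a b| < ε / 2 := by
    rw [abs_lt] at *
    constructor <;> linarith [huy.1, huy.2, hufb.1, hufb.2]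
  have hvfy : |f v y - f a b| < ε / 2 := by
    rw [abs_lt] at *
    constructor <;> linarith [hvy.1, hvy.2, hvfb.1, hvfb.2]
  -- monotone or antitone on [u, v]
  have hmo := hm y (Set.Icc u v) Set.ordConnected_Icc hseg
  rw [abs_lt] at hufy hvfy
  have hbound : f x y ≤ max (f u y) (f v y) ∧ min (f u y) (f v y) ≤ f x y := by
    rcases hmo with hM | hA
    · exact ⟨le_trans (hM hxmem hvmem hxmem.2) (le_max_right _ _),
        le_trans (min_le_left _ _) (hM humem hxmem hxmem.1)⟩
    · exact ⟨le_trans (hA humem hxmem hxmem.1) (le_max_left _ _),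
        le_trans (min_le_right _ _) (hA hxmem hvmem hxmem.2)⟩
  simp only [Real.dist_eq, abs_lt]
  have hmax : max (f u y) (f v y) < f a b + ε / 2 := max_lt (by linarith) (by linarith)
  have hmin : f a b - ε / 2 < min (f u y) (f v y) := lt_min (by linarith) (by linarith)
  constructor <;> [linarith [hbound.2, hmin]; linarith [hbound.1, hmax]]
end

section
/- Let T be a linear order with order topology, X a topological space, T₁ a linear order with order topology, and f : T × X → T₁ separately continuous with all sections t ↦ f(t,x) monotone. Then for every point (t₀,x₀) and every open set V ∋ f(t₀,x₀) in T₁, there is a basic open box (I × U) ∋ (t₀,x₀), with I an order-open interval in T and U open in X, such that f(I × U) ⊆ V. -/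
/-- Embedding of `T` into `T` with `±∞` adjoined. -/
def embInfty {T : Type*} (s : T) : WithBot (WithTop T) := ((s : WithTop T) : WithBot (WithTop T))

lemma embInfty_lt_embInfty {T : Type*} [Preorder T] {s t : T} (h : s < t) :
    embInfty s < embInfty t := by
  simpa [embInfty] using h

lemma lt_of_embInfty_lt {T : Type*} [Preorder T] {s t : T}
    (h : embInfty s < embInfty t) : s < t := by
  simpa [embInfty] using h

/-- Every neighborhood contains an open order-connected neighborhood. -/
lemma exists_ordConnected_nhds {T₁ : Type*} [LinearOrder T₁] [TopologicalSpace T₁]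
    [OrderTopology T₁] {y : T₁} {V : Set T₁} (hV : V ∈ nhds y) :
    ∃ W : Set T₁, IsOpen W ∧ W.OrdConnected ∧ y ∈ W ∧ W ⊆ V := by
  by_cases hl : ∃ l, l < y
  · obtain ⟨l, hl', hIoc⟩ := exists_Ioc_subset_of_mem_nhds hV hl
    by_cases hu : ∃ u, y < u
    · obtain ⟨u, hu', hIco⟩ := exists_Ico_subset_of_mem_nhds hV hu
      refine ⟨Set.Ioo l u, isOpen_Ioo, Set.ordConnected_Ioo, ⟨hl', hu'⟩, ?_⟩
      intro t ht
      rcases le_or_gt t y with h | h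
      · exact hIoc ⟨ht.1, h⟩
      · exact hIco ⟨h.le, ht.2⟩
    · push_neg at hu
      refine ⟨Set.Ioi l, isOpen_Ioi, Set.ordConnected_Ioi, hl', ?_⟩
      intro t ht
      exact hIoc ⟨ht, hu t⟩
  · push_neg at hl
    by_cases hu : ∃ u, y < u
    · obtain ⟨u, hu', hIco⟩ := exists_Ico_subset_of_mem_nhds hV hu
      refine ⟨Set.Iio u, isOpen_Iio, Set.ordConnected_Iio, hu', ?_⟩
      intro t ht
      exact hIco ⟨hl t, ht⟩
    · push_neg at hu
      refine ⟨Set.univ, isOpen_univ, Set.ordConnected_univ, trivial, ?_⟩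
      intro t _
      have : t = y := le_antisymm (hu t) (hl t)
      exact this ▸ mem_of_mem_nhds hV

lemma young_left_aux {T : Type*} [LinearOrder T] [TopologicalSpace T] [OrderTopology T]
    {S : Set T} (hS : IsOpen S) {t₀ : T} (h : t₀ ∈ S) :
    ∃ a : WithBot (WithTop T), ∃ t₁ ∈ S, t₁ ≤ t₀ ∧ a < embInfty t₀ ∧
      ∀ t : T, a < embInfty t → t₁ ≤ t := by
  by_cases hl : ∃ l, l < t₀
  · obtain ⟨u, hu, hsub⟩ := exists_Ioc_subset_of_mem_nhds (hS.mem_nhds h) hl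
    by_cases hc : ∃ c, u < c ∧ c < t₀
    · obtain ⟨c, hc1, hc2⟩ := hc
      exact ⟨embInfty c, c, hsub ⟨hc1, hc2.le⟩, hc2.le, embInfty_lt_embInfty hc2,
        fun t ht => (lt_of_embInfty_lt ht).le⟩
    · push_neg at hc
      exact ⟨embInfty u, t₀, h, le_rfl, embInfty_lt_embInfty hu,
        fun t ht => hc t (lt_of_embInfty_lt ht)⟩
  · push_neg at hl
    exact ⟨⊥, t₀, h, le_rfl, WithBot.bot_lt_coe _, fun t _ => hl t⟩

lemma young_right_aux {T : Type*} [LinearOrder T] [TopologicalSpace T] [OrderTopology T]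
    {S : Set T} (hS : IsOpen S) {t₀ : T} (h : t₀ ∈ S) :
    ∃ b : WithBot (WithTop T), ∃ t₂ ∈ S, t₀ ≤ t₂ ∧ embInfty t₀ < b ∧
      ∀ t : T, embInfty t < b → t ≤ t₂ := by
  by_cases hu : ∃ u, t₀ < u
  · obtain ⟨u, hu', hsub⟩ := exists_Ico_subset_of_mem_nhds (hS.mem_nhds h) hu
    by_cases hc : ∃ c, t₀ < c ∧ c < u
    · obtain ⟨c, hc1, hc2⟩ := hc
      exact ⟨embInfty c, c, hsub ⟨hc1.le, hc2⟩, hc1.le, embInfty_lt_embInfty hc1,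
        fun t ht => (lt_of_embInfty_lt ht).le⟩
    · push_neg at hc
      refine ⟨embInfty u, t₀, h, le_rfl, embInfty_lt_embInfty hu', fun t ht => ?_⟩
      have htu : t < u := lt_of_embInfty_lt ht
      by_contra hlt
      exact absurd htu (not_lt.2 (hc t (lt_of_not_ge hlt)))
  · push_neg at hu
    refine ⟨⊤, t₀, h, le_rfl, ?_, fun t _ => hu t⟩
    exact lt_of_lt_of_le (WithBot.coe_lt_coe.2 (WithTop.coe_lt_top t₀)) le_top

theorem young_pointwise_box {T T₁ X : Type*}
    [LinearOrder T] [TopologicalSpace T] [OrderTopology T]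
    [LinearOrder T₁] [TopologicalSpace T₁] [OrderTopology T₁]
    [TopologicalSpace X]
    (f : T → X → T₁)
    (hct : ∀ x, Continuous fun t => f t x)
    (hcx : ∀ t, Continuous fun x => f t x)
    (hm : ∀ x, Monotone (fun t => f t x) ∨ Antitone (fun t => f t x))
    (t₀ : T) (x₀ : X) (V : Set T₁) (hV : IsOpen V) (hfV : f t₀ x₀ ∈ V) :
    ∃ a b : WithBot (WithTop T), a < embInfty t₀ ∧ embInfty t₀ < b ∧
      ∃ U : Set X, IsOpen U ∧ x₀ ∈ U ∧
        ∀ t : T, a < embInfty t → embInfty t < b → ∀ x ∈ U, f t x ∈ V := by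
  obtain ⟨W, hWo, hWc, hyW, hWV⟩ := exists_ordConnected_nhds (hV.mem_nhds hfV)
  set S : Set T := (fun t => f t x₀) ⁻¹' W with hSdef
  have hSo : IsOpen S := hWo.preimage (hct x₀)
  have ht₀S : t₀ ∈ S := hyW
  obtain ⟨a, t₁, ht₁S, ht₁le, ha, hale⟩ := young_left_aux hSo ht₀S
  obtain ⟨b, t₂, ht₂S, ht₂le, hb, hble⟩ := young_right_aux hSo ht₀S
  refine ⟨a, b, ha, hb, {x | f t₁ x ∈ W} ∩ {x | f t₂ x ∈ W},
    (hWo.preimage (hcx t₁)).inter (hWo.preimage (hcx t₂)), ⟨ht₁S, ht₂S⟩, ?_⟩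
  intro t hta htb x hx
  have h1 : t₁ ≤ t := hale t hta
  have h2 : t ≤ t₂ := hble t htb
  apply hWV
  rcases hm x with hmono | hanti
  · exact hWc.out hx.1 hx.2 ⟨hmono h1, hmono h2⟩
  · exact hWc.out hx.2 hx.1 ⟨hanti h2, hanti h1⟩
end

section
/- Let T, T₁ be linear orders with order topologies and X a topological space. Suppose f : T × X → T₁ is such that every section x ↦ f(t,x) is continuous and every section t ↦ f(t,x) is both continuous and monotone. Then f is sequentially continuous on T × X: if (tₙ, xₙ) → (t₀, x₀), then f(tₙ, xₙ) → f(t₀, x₀). -/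
open Filter Topology

private lemma young_exists_le {T : Type*} [LinearOrder T] [TopologicalSpace T]
    [OrderTopology T] {tn : ℕ → T} {t₀ : T} (ht : Tendsto tn atTop (𝓝 t₀))
    {U : Set T} (hU : IsOpen U) (h₀ : t₀ ∈ U) :
    ∃ p ≤ t₀, p ∈ U ∧ ∀ᶠ n in atTop, p ≤ tn n := by
  by_cases h : ∃ p ∈ U, p < t₀
  · obtain ⟨p, hpU, hp⟩ := h
    exact ⟨p, hp.le, hpU, (ht.eventually (eventually_gt_nhds hp)).mono fun n hn => hn.le⟩
  · refine ⟨t₀, le_rfl, h₀, ht.eventually ?_⟩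
    have : U ⊆ Set.Ici t₀ := fun p hp => le_of_not_gt fun hlt => h ⟨p, hp, hlt⟩
    exact Filter.eventually_of_mem (mem_of_superset (hU.mem_nhds h₀) this) fun x hx => hx

private lemma young_exists_ge {T : Type*} [LinearOrder T] [TopologicalSpace T]
    [OrderTopology T] {tn : ℕ → T} {t₀ : T} (ht : Tendsto tn atTop (𝓝 t₀))
    {U : Set T} (hU : IsOpen U) (h₀ : t₀ ∈ U) :
    ∃ q, t₀ ≤ q ∧ q ∈ U ∧ ∀ᶠ n in atTop, tn n ≤ q := by
  by_cases h : ∃ q ∈ U, t₀ < q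
  · obtain ⟨q, hqU, hq⟩ := h
    exact ⟨q, hq.le, hqU, (ht.eventually (eventually_lt_nhds hq)).mono fun n hn => hn.le⟩
  · have hsub : U ⊆ Set.Iic t₀ := fun q hq => le_of_not_gt fun hlt => h ⟨q, hq, hlt⟩
    have hev : ∀ᶠ t in 𝓝 t₀, t ≤ t₀ :=
      Filter.eventually_of_mem (mem_of_superset (hU.mem_nhds h₀) hsub) fun x hx => hx
    exact ⟨t₀, le_rfl, h₀, ht.eventually hev⟩

theorem young_sequential {T T₁ X : Type*}
    [LinearOrder T] [TopologicalSpace T] [OrderTopology T]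
    [LinearOrder T₁] [TopologicalSpace T₁] [OrderTopology T₁]
    [TopologicalSpace X]
    (f : T → X → T₁)
    (hct : ∀ x, Continuous fun t => f t x)
    (hcx : ∀ t, Continuous fun x => f t x)
    (hm : ∀ x, Monotone (fun t => f t x) ∨ Antitone (fun t => f t x))
    (u : ℕ → T × X) (t₀ : T) (x₀ : X)
    (hu : Tendsto u atTop (𝓝 (t₀, x₀))) :
    Tendsto (fun n => f (u n).1 (u n).2) atTop (𝓝 (f t₀ x₀)) := by
  set tn : ℕ → T := fun n => (u n).1 with htn
  set xn : ℕ → X := fun n => (u n).2 with hxn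
  have ht : Tendsto tn atTop (𝓝 t₀) := (continuous_fst.tendsto (t₀, x₀)).comp hu
  have hx : Tendsto xn atTop (𝓝 x₀) := (continuous_snd.tendsto (t₀, x₀)).comp hu
  rw [tendsto_order]
  constructor
  · intro a ha
    have hUo : IsOpen {t | a < f t x₀} := isOpen_lt continuous_const (hct x₀)
    obtain ⟨p, hp, hpU, hpev⟩ := young_exists_le ht hUo ha
    obtain ⟨q, hq, hqU, hqev⟩ := young_exists_ge ht hUo ha
    have e1 : ∀ᶠ n in atTop, a < f p (xn n) :=
      (((hcx p).tendsto x₀).comp hx).eventually (eventually_gt_nhds hpU)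
    have e2 : ∀ᶠ n in atTop, a < f q (xn n) :=
      (((hcx q).tendsto x₀).comp hx).eventually (eventually_gt_nhds hqU)
    filter_upwards [hpev, hqev, e1, e2] with n h1 h2 h3 h4
    rcases hm (xn n) with mono | anti
    · exact lt_of_lt_of_le h3 (mono h1)
    · exact lt_of_lt_of_le h4 (anti h2)
  · intro b hb
    have hUo : IsOpen {t | f t x₀ < b} := isOpen_lt (hct x₀) continuous_const
    obtain ⟨p, hp, hpU, hpev⟩ := young_exists_le ht hUo hb
    obtain ⟨q, hq, hqU, hqev⟩ := young_exists_ge ht hUo hb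
    have e1 : ∀ᶠ n in atTop, f p (xn n) < b :=
      (((hcx p).tendsto x₀).comp hx).eventually (eventually_lt_nhds hpU)
    have e2 : ∀ᶠ n in atTop, f q (xn n) < b :=
      (((hcx q).tendsto x₀).comp hx).eventually (eventually_lt_nhds hqU)
    filter_upwards [hpev, hqev, e1, e2] with n h1 h2 h3 h4
    rcases hm (xn n) with mono | anti
    · exact lt_of_le_of_lt (mono h2) h4
    · exact lt_of_le_of_lt (anti h1) h3
end

section
/- Let f : ℝ³ → ℝ be continuous in each of its three variables separately and monotone in the first and second variables separately. Then f is jointly continuous on ℝ³. -/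
lemma young_between_abs {m v M c ε : ℝ} (h1 : m ≤ v) (h2 : v ≤ M)
    (hm : |m - c| < ε) (hM : |M - c| < ε) : |v - c| < ε := by
  rw [abs_sub_lt_iff] at hm hM ⊢
  constructor <;> linarith [hm.1, hm.2, hM.1, hM.2]

lemma young_aux_s16 {Y : Type*} [TopologicalSpace Y] (g : ℝ → Y → ℝ)
    (hx : ∀ y, Continuous fun x => g x y)
    (hy : ∀ x, Continuous (g x))
    (hm : ∀ y, Monotone (fun x => g x y) ∨ Antitone (fun x => g x y)) :
    Continuous fun p : ℝ × Y => g p.1 p.2 := by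
  rw [continuous_iff_continuousAt]
  rintro ⟨x₀, y₀⟩
  rw [ContinuousAt, Metric.tendsto_nhds]
  intro ε hε
  have hε2 : 0 < ε / 2 := by linarith
  obtain ⟨δ, hδ, hδ'⟩ := Metric.continuousAt_iff.1 ((hx y₀).continuousAt (x := x₀)) (ε / 2) hε2
  set a := x₀ - δ / 2 with ha_def
  set b := x₀ + δ / 2 with hb_def
  have hda : dist a x₀ < δ := by
    rw [Real.dist_eq, abs_sub_lt_iff]; constructor <;> simp [ha_def] <;> linarith
  have hdb : dist b x₀ < δ := by
    rw [Real.dist_eq, abs_sub_lt_iff]; constructor <;> simp [hb_def] <;> linarith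
  have ha : dist (g a y₀) (g x₀ y₀) < ε / 2 := hδ' hda
  have hb : dist (g b y₀) (g x₀ y₀) < ε / 2 := hδ' hdb
  have hU1 : ∀ᶠ y in nhds y₀, dist (g a y) (g a y₀) < ε / 2 :=
    Metric.tendsto_nhds.1 ((hy a).continuousAt (x := y₀)) (ε / 2) hε2
  have hU2 : ∀ᶠ y in nhds y₀, dist (g b y) (g b y₀) < ε / 2 :=
    Metric.tendsto_nhds.1 ((hy b).continuousAt (x := y₀)) (ε / 2) hε2
  have hx_ev : ∀ᶠ x in nhds x₀, x ∈ Set.Icc a b :=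
    Icc_mem_nhds (by simp [ha_def]; linarith) (by simp [hb_def]; linarith)
  have hprod := hx_ev.prod_nhds (hU1.and hU2)
  filter_upwards [hprod] with p hp
  obtain ⟨⟨hax, hxb⟩, h1, h2⟩ := hp
  have haC : dist (g a p.2) (g x₀ y₀) < ε :=
    lt_of_le_of_lt (dist_triangle _ (g a y₀) _) (by linarith)
  have hbC : dist (g b p.2) (g x₀ y₀) < ε :=
    lt_of_le_of_lt (dist_triangle _ (g b y₀) _) (by linarith)
  rw [Real.dist_eq] at haC hbC ⊢
  rcases hm p.2 with hmono | hanti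
  · exact young_between_abs (hmono hax) (hmono hxb) haC hbC
  · exact young_between_abs (hanti hxb) (hanti hax) hbC haC

theorem young_real_three (f : ℝ → ℝ → ℝ → ℝ)
    (hc1 : ∀ t₂ τ, Continuous fun t₁ => f t₁ t₂ τ)
    (hc2 : ∀ t₁ τ, Continuous fun t₂ => f t₁ t₂ τ)
    (hc3 : ∀ t₁ t₂, Continuous fun τ => f t₁ t₂ τ)
    (hm1 : ∀ t₂ τ, Monotone (fun t₁ => f t₁ t₂ τ) ∨ Antitone (fun t₁ => f t₁ t₂ τ))
    (hm2 : ∀ t₁ τ, Monotone (fun t₂ => f t₁ t₂ τ) ∨ Antitone (fun t₂ => f t₁ t₂ τ)) :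
    Continuous fun p : ℝ × ℝ × ℝ => f p.1 p.2.1 p.2.2 := by
  exact young_aux_s16 (fun t₁ (q : ℝ × ℝ) => f t₁ q.1 q.2)
    (fun q => hc1 q.1 q.2)
    (fun t₁ => young_aux_s16 (f t₁) (hc2 t₁) (hc3 t₁) (hm2 t₁))
    (fun q => hm1 q.1 q.2)
end
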